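/- Let A: X → X* be continuous, linear, and monotone. Then the function 𝒞_A: X×X* → (−∞,+∞], (x,x*) ↦ q_{A₊}(x) + q_{A₊}*(x* − A∘x), is an autoconjugate representer for A. In particular, if A is symmetric, then 𝒞_A = q_A ⊕ q_A*, i.e. 𝒞_A(x,x*) = q_A(x) + q_A*(x*). -/

import Mathlib

noncomputable section
open scoped Classical
open Filter Topology

/-- The Fenchel conjugate of `F : X × X* → (-∞,+∞]`, as a function on `X* × X`:
`F*(x*,x) = sup_{(y,y*)} (⟨y,x*⟩ + ⟨x,y*⟩ - F(y,y*))`. -/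
def conj2 {X : Type*} [NormedAddCommGroup X] [NormedSpace ℝ X]
    (F : X × (X →L[ℝ] ℝ) → EReal) : (X →L[ℝ] ℝ) × X → EReal :=
  fun p => ⨆ q : X × (X →L[ℝ] ℝ), ((p.1 q.1 + q.2 p.2 : ℝ) : EReal) - F q

/-- `F` is autoconjugate: `F*(x*,x) = F(x,x*)` for all `(x,x*)`. -/
def Autoconjugate {X : Type*} [NormedAddCommGroup X] [NormedSpace ℝ X]
    (F : X × (X →L[ℝ] ℝ) → EReal) : Prop :=
  ∀ (x : X) (x' : X →L[ℝ] ℝ), conj2 F (x', x) = F (x, x')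

/-- `F` is a representer for the set-valued operator `A : X ⇉ X*`:
`gra A = {(x,x*) : F(x,x*) = ⟨x,x*⟩}`. -/
def IsRepresenter {X : Type*} [NormedAddCommGroup X] [NormedSpace ℝ X]
    (F : X × (X →L[ℝ] ℝ) → EReal) (A : X → Set (X →L[ℝ] ℝ)) : Prop :=
  ∀ (x : X) (x' : X →L[ℝ] ℝ), x' ∈ A x ↔ F (x, x') = ((x' x : ℝ) : EReal)

/-- A set-valued operator `A : X ⇉ X*` is monotone. -/
def MonotoneOp {X : Type*} [NormedAddCommGroup X] [NormedSpace ℝ X]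
    (A : X → Set (X →L[ℝ] ℝ)) : Prop :=
  ∀ ⦃x y : X⦄ ⦃x' y' : X →L[ℝ] ℝ⦄, x' ∈ A x → y' ∈ A y → 0 ≤ (x' - y') (x - y)

/-- A set-valued operator is maximal monotone if it is monotone and admits no proper
monotone extension (in the sense of graph inclusion). -/
def MaximalMonotoneOp {X : Type*} [NormedAddCommGroup X] [NormedSpace ℝ X]
    (A : X → Set (X →L[ℝ] ℝ)) : Prop :=
  MonotoneOp A ∧ ∀ B : X → Set (X →L[ℝ] ℝ), MonotoneOp B → (∀ x, A x ⊆ B x) → B = A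

/-- The quadratic function `q_A(x) = ½⟨x,Ax⟩` associated with a continuous linear
`A : X → X*`. -/
def qF {X : Type*} [NormedAddCommGroup X] [NormedSpace ℝ X]
    (A : X →L[ℝ] X →L[ℝ] ℝ) : X → ℝ :=
  fun x => (1 / 2) * A x x

/-- The Fenchel conjugate of a real-valued function `φ : X → ℝ`, as an `EReal`-valued
function on `X*`: `φ*(x*) = sup_y (⟨y,x*⟩ - φ(y))`. -/
def legendre {X : Type*} [NormedAddCommGroup X] [NormedSpace ℝ X]
    (φ : X → ℝ) : (X →L[ℝ] ℝ) → EReal :=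
  fun x' => ⨆ y : X, ((x' y - φ y : ℝ) : EReal)

/-- The symmetric part `A₊ = ½A + ½A*` of a continuous linear `A : X → X*`, where the
adjoint (restricted to `X`) is `A.flip`. -/
def symPart {X : Type*} [NormedAddCommGroup X] [NormedSpace ℝ X]
    (A : X →L[ℝ] X →L[ℝ] ℝ) : X →L[ℝ] X →L[ℝ] ℝ :=
  (1 / 2 : ℝ) • (A + A.flip)

/-- The antisymmetric part `A∘ = ½A - ½A*` of a continuous linear `A : X → X*`. -/
def antiPart {X : Type*} [NormedAddCommGroup X] [NormedSpace ℝ X]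
    (A : X →L[ℝ] X →L[ℝ] ℝ) : X →L[ℝ] X →L[ℝ] ℝ :=
  (1 / 2 : ℝ) • (A - A.flip)

/-- The Fitzpatrick function of a continuous linear `A : X → X*`:
`F_A(x,x*) = sup_y (⟨x,Ay⟩ + ⟨y,x*⟩ - ⟨y,Ay⟩)`. -/
def fitz {X : Type*} [NormedAddCommGroup X] [NormedSpace ℝ X]
    (A : X →L[ℝ] X →L[ℝ] ℝ) : X × (X →L[ℝ] ℝ) → EReal :=
  fun p => ⨆ y : X, ((A y p.1 + p.2 y - A y y : ℝ) : EReal)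

/-- The Ghoussoub autoconjugate function `𝒞_A(x,x*) = q_{A₊}(x) + q_{A₊}*(x* - A∘x)`
associated with a continuous linear monotone `A : X → X*`. -/
def ghoussoub {X : Type*} [NormedAddCommGroup X] [NormedSpace ℝ X]
    (A : X →L[ℝ] X →L[ℝ] ℝ) : X × (X →L[ℝ] ℝ) → EReal :=
  fun p => ((qF (symPart A) p.1 : ℝ) : EReal) + legendre (qF (symPart A)) (p.2 - antiPart A p.1)

section aux
variable {X : Type*} [NormedAddCommGroup X] [NormedSpace ℝ X]

lemma symPart_apply (A : X →L[ℝ] X →L[ℝ] ℝ) (x y : X) :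
    symPart A x y = (1/2) * (A x y + A y x) := by
  simp [symPart, ContinuousLinearMap.smul_apply, ContinuousLinearMap.add_apply]; ring

lemma antiPart_apply (A : X →L[ℝ] X →L[ℝ] ℝ) (x y : X) :
    antiPart A x y = (1/2) * (A x y - A y x) := by
  simp [antiPart, ContinuousLinearMap.smul_apply, ContinuousLinearMap.sub_apply]

lemma qF_symPart (A : X →L[ℝ] X →L[ℝ] ℝ) (x : X) :
    qF (symPart A) x = (1/2) * A x x := by
  simp [qF, symPart_apply]; ring

lemma expand_sub (A : X →L[ℝ] X →L[ℝ] ℝ) (x y : X) :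
    A (x - y) (x - y) = A x x - A x y - A y x + A y y := by
  simp [map_sub, ContinuousLinearMap.sub_apply]; ring

lemma key_ineq {A : X →L[ℝ] X →L[ℝ] ℝ} (hmono : ∀ x : X, 0 ≤ A x x) (x y : X) :
    symPart A x y - qF (symPart A) y ≤ qF (symPart A) x := by
  have h := hmono (x - y)
  rw [expand_sub] at h
  rw [symPart_apply, qF_symPart, qF_symPart]
  linarith

lemma legendre_gt_bot (φ : X → ℝ) (z' : X →L[ℝ] ℝ) : (⊥ : EReal) < legendre φ z' :=
  (EReal.bot_lt_coe _).trans_le (le_iSup (fun y : X => ((z' y - φ y : ℝ) : EReal)) 0)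

lemma legendre_at_symPart {A : X →L[ℝ] X →L[ℝ] ℝ} (hmono : ∀ x : X, 0 ≤ A x x) (x : X) :
    legendre (qF (symPart A)) (symPart A x) = ((qF (symPart A) x : ℝ) : EReal) := by
  refine le_antisymm (iSup_le fun y => ?_) ?_
  · exact EReal.coe_le_coe_iff.2 (key_ineq hmono x y)
  · have h := le_iSup (fun y : X => ((symPart A x y - qF (symPart A) y : ℝ) : EReal)) x
    have e : (qF (symPart A) x : ℝ) = symPart A x x - qF (symPart A) x := by
      simp [qF]; ring
    rw [e]
    exact h

lemma esub_le (a c : ℝ) (b : EReal) (h : ((a - c : ℝ) : EReal) ≤ b) :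
    (a : EReal) - b ≤ (c : EReal) := by
  induction b using EReal.rec with
  | bot => exact (EReal.coe_ne_bot _ (le_bot_iff.1 h)).elim
  | coe r =>
    rw [← EReal.coe_sub]
    exact EReal.coe_le_coe_iff.2 (by linarith [EReal.coe_le_coe_iff.1 h])
  | top => simp [EReal.sub_top]

lemma coe_add_iSup_le {ι : Sort*} (c : ℝ) (g : ι → EReal) (T : EReal)
    (h : ∀ i, (c : EReal) + g i ≤ T) : (c : EReal) + (⨆ i, g i) ≤ T := by
  rw [add_comm]
  refine EReal.add_le_of_le_sub ?_
  refine iSup_le fun i => ?_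
  refine (EReal.le_sub_iff_add_le (Or.inl (EReal.coe_ne_bot c)) (Or.inl (EReal.coe_ne_top c))).2 ?_
  rw [add_comm]; exact h i

end aux

/-- Corollary 2.7. For `A : X → X*` continuous, linear and monotone,
`𝒞_A` is an autoconjugate representer for `A`; if moreover `A` is symmetric then
`𝒞_A = q_A ⊕ q_A*`. -/
theorem stmt6 {X : Type*} [NormedAddCommGroup X] [NormedSpace ℝ X] [CompleteSpace X]
    (hrefl : Function.Surjective (NormedSpace.inclusionInDoubleDual ℝ X))
    (A : X →L[ℝ] X →L[ℝ] ℝ)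
    (hmono : ∀ x : X, 0 ≤ A x x) :
    Autoconjugate (ghoussoub A) ∧
    IsRepresenter (ghoussoub A) (fun x => {x' | x' = A x}) ∧
    ((∀ x y : X, A x y = A y x) →
      ∀ (x : X) (x' : X →L[ℝ] ℝ),
        ghoussoub A (x, x') = ((qF A x : ℝ) : EReal) + legendre (qF A) x') := by
  refine ⟨?_, ?_, ?_⟩
  · -- Autoconjugate
    intro x x'
    show (⨆ q : X × (X →L[ℝ] ℝ), ((x' q.1 + q.2 x : ℝ) : EReal) - ghoussoub A q)
        = ((qF (symPart A) x : ℝ) : EReal)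
          + legendre (qF (symPart A)) (x' - antiPart A x)
    refine le_antisymm (iSup_le ?_) ?_
    · rintro ⟨y, y'⟩
      show ((x' y + y' x : ℝ) : EReal)
          - (((qF (symPart A) y : ℝ) : EReal) + legendre (qF (symPart A)) (y' - antiPart A y)) ≤ _
      rcases eq_or_ne (legendre (qF (symPart A)) (y' - antiPart A y)) ⊤ with hM | hM
      · rw [hM, EReal.coe_add_top, EReal.sub_top]
        exact bot_le
      · have hMb : legendre (qF (symPart A)) (y' - antiPart A y) ≠ ⊥ :=
          (legendre_gt_bot _ _).ne'
        set m := (legendre (qF (symPart A)) (y' - antiPart A y)).toReal with hmdef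
        have hm : legendre (qF (symPart A)) (y' - antiPart A y) = (m : EReal) :=
          (EReal.coe_toReal hM hMb).symm
        have h1 : y' x - antiPart A y x - qF (symPart A) x ≤ m := by
          have h : (((y' - antiPart A y) x - qF (symPart A) x : ℝ) : EReal)
              ≤ legendre (qF (symPart A)) (y' - antiPart A y) := le_iSup
            (fun z : X => (((y' - antiPart A y) z - qF (symPart A) z : ℝ) : EReal)) x
          rw [hm] at h
          have := EReal.coe_le_coe_iff.1 h
          simpa [ContinuousLinearMap.sub_apply] using this
        have h2 : (((x' - antiPart A x) y - qF (symPart A) y : ℝ) : EReal)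
            ≤ legendre (qF (symPart A)) (x' - antiPart A x) :=
          le_iSup (fun z : X => (((x' - antiPart A x) z - qF (symPart A) z : ℝ) : EReal)) y
        rw [hm, ← EReal.coe_add, ← EReal.coe_sub]
        calc ((x' y + y' x - (qF (symPart A) y + m) : ℝ) : EReal)
            ≤ ((qF (symPart A) x + ((x' - antiPart A x) y - qF (symPart A) y) : ℝ) : EReal) := by
              refine EReal.coe_le_coe_iff.2 ?_
              have hskew : antiPart A y x = - antiPart A x y := by
                rw [antiPart_apply, antiPart_apply]; ring
              simp only [ContinuousLinearMap.sub_apply]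
              linarith
          _ = ((qF (symPart A) x : ℝ) : EReal)
              + (((x' - antiPart A x) y - qF (symPart A) y : ℝ) : EReal) := by
              rw [← EReal.coe_add]
          _ ≤ _ := add_le_add_right h2 _
    · refine coe_add_iSup_le _ _ _ fun z => ?_
      rw [← EReal.coe_add]
      have e1 : symPart A x + antiPart A z - antiPart A z = symPart A x := by
        abel
      have key : ((qF (symPart A) x + ((x' - antiPart A x) z - qF (symPart A) z) : ℝ) : EReal)
          = ((x' z + (symPart A x + antiPart A z) x : ℝ) : EReal)
            - (((qF (symPart A) z : ℝ) : EReal)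
              + legendre (qF (symPart A)) ((symPart A x + antiPart A z) - antiPart A z)) := by
        rw [e1, legendre_at_symPart hmono, ← EReal.coe_add, ← EReal.coe_sub]
        refine EReal.coe_eq_coe_iff.2 ?_
        have hskew : antiPart A z x = - antiPart A x z := by
          rw [antiPart_apply, antiPart_apply]; ring
        have hdiag : symPart A x x = 2 * qF (symPart A) x := by
          rw [qF_symPart, symPart_apply]; ring
        simp only [ContinuousLinearMap.sub_apply, ContinuousLinearMap.add_apply]
        linarith
      rw [key]
      exact le_iSup
        (fun q : X × (X →L[ℝ] ℝ) => ((x' q.1 + q.2 x : ℝ) : EReal) - ghoussoub A q)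
        (z, symPart A x + antiPart A z)
  · -- Representer
    intro x x'
    constructor
    · intro hx'
      have hx'' : x' = A x := hx'
      subst hx''
      show ((qF (symPart A) x : ℝ) : EReal)
          + legendre (qF (symPart A)) (A x - antiPart A x) = ((A x x : ℝ) : EReal)
      have e : A x - antiPart A x = symPart A x := by
        ext y
        simp only [ContinuousLinearMap.sub_apply]
        rw [antiPart_apply, symPart_apply]; ring
      rw [e, legendre_at_symPart hmono, ← EReal.coe_add]
      refine EReal.coe_eq_coe_iff.2 ?_
      rw [qF_symPart]; ring
    · intro h
      have hL : ((qF (symPart A) x : ℝ) : EReal)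
          + legendre (qF (symPart A)) (x' - antiPart A x) = ((x' x : ℝ) : EReal) := h
      have hMb : legendre (qF (symPart A)) (x' - antiPart A x) ≠ ⊥ :=
        (legendre_gt_bot _ _).ne'
      have hMt : legendre (qF (symPart A)) (x' - antiPart A x) ≠ ⊤ := by
        intro hT
        rw [hT, EReal.coe_add_top] at hL
        exact (EReal.coe_ne_top _ hL.symm).elim
      set l := (legendre (qF (symPart A)) (x' - antiPart A x)).toReal with hldef
      have hl : legendre (qF (symPart A)) (x' - antiPart A x) = (l : EReal) :=
        (EReal.coe_toReal hMt hMb).symm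
      have hlv : qF (symPart A) x + l = x' x := by
        rw [hl, ← EReal.coe_add] at hL
        exact EReal.coe_eq_coe_iff.1 hL
      have hy : ∀ y : X, x' y - antiPart A x y - qF (symPart A) y ≤ l := by
        intro y
        have h : (((x' - antiPart A x) y - qF (symPart A) y : ℝ) : EReal)
            ≤ legendre (qF (symPart A)) (x' - antiPart A x) := le_iSup
          (fun z : X => (((x' - antiPart A x) z - qF (symPart A) z : ℝ) : EReal)) y
        rw [hl] at h
        have := EReal.coe_le_coe_iff.1 h
        simpa [ContinuousLinearMap.sub_apply] using this
      show x' = A x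
      ext v
      have hq : ∀ t : ℝ, t * (x' v - A x v) ≤ t^2 * ((1/2) * A v v) := by
        intro t
        have h2 := hy (x + t • v)
        rw [qF_symPart] at h2
        have hlv' : l = x' x - (1/2) * A x x := by
          rw [qF_symPart] at hlv; linarith
        rw [hlv'] at h2
        have hNxx : antiPart A x x = 0 := by rw [antiPart_apply]; ring
        have hNexp : antiPart A x (x + t • v) = t * antiPart A x v := by
          rw [map_add, map_smul, smul_eq_mul, hNxx]; ring
        have hAexp : A (x + t • v) (x + t • v)
            = A x x + t * A x v + t * A v x + t^2 * A v v := by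
          simp only [map_add, map_smul, ContinuousLinearMap.add_apply,
            ContinuousLinearMap.smul_apply, smul_eq_mul]
          ring
        rw [map_add, map_smul, smul_eq_mul, hNexp, hAexp] at h2
        have hNv : antiPart A x v = (1/2) * (A x v - A v x) := antiPart_apply A x v
        rw [hNv] at h2
        linarith
      have hd : x' v - A x v = 0 := by
        set d := x' v - A x v with hddef
        set c := (1/2) * A v v with hcdef
        have hc : 0 ≤ c := by
          have := hmono v; rw [hcdef]; linarith
        have hu : (0:ℝ) < 2*c+1 := by linarith
        have h1 := hq (d / (2*c+1))
        rw [div_pow, div_mul_eq_mul_div, div_mul_eq_mul_div,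
          div_le_div_iff₀ hu (by positivity)] at h1
        nlinarith [sq_nonneg d, h1, hc]
      linarith [hd]
  · -- symmetric case
    intro hs x x'
    have hqe : qF (symPart A) = qF A := by
      funext w
      rw [qF_symPart]; simp [qF]
    have hN : antiPart A x = 0 := by
      ext y
      rw [antiPart_apply, hs x y]
      simp
    show ((qF (symPart A) x : ℝ) : EReal)
        + legendre (qF (symPart A)) (x' - antiPart A x) = _
    rw [hqe, hN, sub_zero]
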